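/- Let N be an odd positive integer and let p be an integer with 1 ≤ p ≤ N. Then ∑_{i = p + (3-N)/2}^{(N+1)/2} cos((i-1)π/N) = cos²(pπ/(2N)) / sin(π/(2N)). -/

import Mathlib

open Real Finset

theorem sum_cos_odd_case (N p : ℤ) (hN : 0 < N) (hNo : Odd N) (hp1 : 1 ≤ p) (hpN : p ≤ N) :
    ∑ i ∈ Finset.Icc (p + (3 - N) / 2) ((N + 1) / 2),
        Real.cos (((i : ℝ) - 1) * Real.pi / (N : ℝ)) =
      Real.cos ((p : ℝ) * Real.pi / (2 * (N : ℝ))) ^ 2 / Real.sin (Real.pi / (2 * (N : ℝ))) := by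
  obtain ⟨m, hm⟩ := hNo
  have hNR : (N : ℝ) ≠ 0 := by positivity
  have hNpos : (0:ℝ) < N := by exact_mod_cast hN
  have hsinpos : 0 < Real.sin (Real.pi / (2 * (N : ℝ))) := by
    apply Real.sin_pos_of_pos_of_lt_pi
    · positivity
    · rw [div_lt_iff₀ (by positivity)]
      have h1 : (1:ℝ) ≤ N := by exact_mod_cast hN
      nlinarith [Real.pi_pos]
  have hsin : Real.sin (Real.pi / (2 * (N : ℝ))) ≠ 0 := ne_of_gt hsinpos
  have hb1 : p + (3 - N) / 2 = p + 1 - m := by omega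
  have hb2 : (N + 1) / 2 = m + 1 := by omega
  rw [hb1, hb2, Int.Icc_eq_finset_map, Finset.sum_map]
  set F : ℕ → ℝ := fun k => Real.sin ((2 * ((p:ℝ) - m + k) - 1) * Real.pi / (2 * N)) with hF
  have hterm : ∀ k ∈ Finset.range (m + 1 + 1 - (p + 1 - m)).toNat,
      Real.cos ((((Nat.castEmbedding.trans <| addLeftEmbedding (p + 1 - m)) k : ℤ) - 1 : ℝ)
        * Real.pi / (N : ℝ))
        = (F (k + 1) - F k) / (2 * Real.sin (Real.pi / (2 * (N : ℝ)))) := by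
    intro k _
    rw [eq_div_iff (by positivity), hF]
    simp only [Function.Embedding.trans_apply, Nat.castEmbedding_apply, addLeftEmbedding_apply]
    rw [Real.sin_sub_sin]
    have e1 : ((2 * ((p:ℝ) - m + ((k+1 : ℕ):ℝ)) - 1) * Real.pi / (2 * N)
        - (2 * ((p:ℝ) - m + k) - 1) * Real.pi / (2 * N)) / 2 = Real.pi / (2 * N) := by
      push_cast; field_simp; ring
    have e2 : ((2 * ((p:ℝ) - m + ((k+1 : ℕ):ℝ)) - 1) * Real.pi / (2 * N)
        + (2 * ((p:ℝ) - m + k) - 1) * Real.pi / (2 * N)) / 2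
        = (((p:ℝ) - m + k)) * Real.pi / N := by
      push_cast; field_simp; ring
    have e3 : (((p + 1 - m + (k:ℤ) : ℤ) : ℝ) - 1) = ((p:ℝ) - m + k) := by push_cast; ring
    rw [e1, e2, e3]; ring
  rw [Finset.sum_congr rfl hterm, ← Finset.sum_div, Finset.sum_range_sub]
  have hn : (((m + 1 + 1 - (p + 1 - m)).toNat : ℤ) : ℝ) = 2 * (m:ℝ) + 1 - p := by
    rw [Int.toNat_of_nonneg (by omega)]; push_cast; ring
  push_cast at hn
  have hFn : F (m + 1 + 1 - (p + 1 - m)).toNat = 1 := by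
    rw [hF]
    simp only [hn]
    have : (2 * ((p:ℝ) - m + (2 * (m:ℝ) + 1 - p)) - 1) * Real.pi / (2 * N) = Real.pi / 2 := by
      have : (N:ℝ) = 2 * m + 1 := by exact_mod_cast hm
      rw [this]
      have h1 : (2:ℝ) * (m:ℝ) + 1 ≠ 0 := by
        rw [← this]; exact hNR
      field_simp
      ring
    rw [this, Real.sin_pi_div_two]
  have hF0 : F 0 = -Real.cos (2 * ((p:ℝ) * Real.pi / (2 * N))) := by
    show Real.sin ((2 * ((p:ℝ) - m + ((0:ℕ):ℝ)) - 1) * Real.pi / (2 * N)) = _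
    have : (2 * ((p:ℝ) - m + ((0:ℕ):ℝ)) - 1) * Real.pi / (2 * N)
        = 2 * ((p:ℝ) * Real.pi / (2 * N)) - Real.pi / 2 := by
      have hNm : (N:ℝ) = 2 * m + 1 := by exact_mod_cast hm
      rw [hNm]
      have h1 : (2:ℝ) * (m:ℝ) + 1 ≠ 0 := by rw [← hNm]; exact hNR
      push_cast
      field_simp
      ring
    rw [this, Real.sin_sub_pi_div_two]
  rw [hFn, hF0, Real.cos_sq]
  field_simp
  ring
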